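/- Let G and H be nontrivial connected finite graphs and ℓ ≥ 2. If S is an {ℓ}-resolving set of G and S' is an ℓ-solid-resolving set of H, then S × S' is an {ℓ}-resolving set of G □ H. -/

import Mathlib

open SimpleGraph

variable {V : Type*}

/-- Distance from a vertex to a set of vertices. -/
noncomputable def dSet (G : SimpleGraph V) (s : V) (X : Set V) : ℕ :=
  sInf ((G.dist s) '' X)

/-- `S` is an `ℓ`-solid-resolving set of `G`. -/
def LSolid (G : SimpleGraph V) (S : Set V) (ℓ : ℕ) : Prop :=
  ∀ X Y : Set V, X.Nonempty → Y.Nonempty → X.ncard ≤ ℓ → X ≠ Y →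
    ∃ s ∈ S, dSet G s X ≠ dSet G s Y

/-- `S` is an `{ℓ}`-resolving set of `G`. -/
def LResolving (G : SimpleGraph V) (S : Set V) (ℓ : ℕ) : Prop :=
  ∀ X Y : Set V, X.Nonempty → Y.Nonempty → X.ncard ≤ ℓ → Y.ncard ≤ ℓ → X ≠ Y →
    ∃ s ∈ S, dSet G s X ≠ dSet G s Y

/-- The `ℓ`-solid-metric dimension of `G`. -/
noncomputable def solidDim (G : SimpleGraph V) (ℓ : ℕ) : ℕ :=
  sInf {k | ∃ S : Set V, LSolid G S ℓ ∧ S.ncard = k}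

/-- The `{ℓ}`-metric dimension of `G`. -/
noncomputable def lDim (G : SimpleGraph V) (ℓ : ℕ) : ℕ :=
  sInf {k | ∃ S : Set V, LResolving G S ℓ ∧ S.ncard = k}

section Aux

variable {W : Type*}

lemma dSet_le {G : SimpleGraph V} {s x : V} {X : Set V} (hx : x ∈ X) :
    dSet G s X ≤ G.dist s x :=
  Nat.sInf_le ⟨x, hx, rfl⟩

lemma exists_dSet {G : SimpleGraph V} (s : V) {X : Set V} (hX : X.Nonempty) :
    ∃ x ∈ X, dSet G s X = G.dist s x := by
  obtain ⟨x, hx, h⟩ := Nat.sInf_mem (hX.image (G.dist s))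
  exact ⟨x, hx, h.symm⟩

/-- From an `ℓ`-solid-resolving set: a point outside a small set can be strictly
separated from it. -/
lemma solid_point {H : SimpleGraph W} {S' : Set W} {ℓ : ℕ} (hS' : LSolid H S' ℓ)
    {b : W} {D : Set W} (hD : D.Nonempty) (hcard : D.ncard ≤ ℓ) (hb : b ∉ D) :
    ∃ s' ∈ S', ∀ w ∈ D, H.dist s' b < H.dist s' w := by
  obtain ⟨s', hs', hne⟩ := hS' D (insert b D) hD ⟨b, Set.mem_insert _ _⟩ hcard
    (fun h => hb (h ▸ Set.mem_insert b D))
  have h2 : dSet H s' (insert b D) ≤ dSet H s' D := by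
    obtain ⟨x, hx, hval⟩ := exists_dSet s' hD
    exact hval ▸ dSet_le (Set.mem_insert_of_mem _ hx)
  obtain ⟨x, hx, hval⟩ := exists_dSet s' (⟨b, Set.mem_insert _ _⟩ : (insert b D).Nonempty)
  have hlt : H.dist s' b < dSet H s' D := by
    rcases Set.mem_insert_iff.mp hx with rfl | hxD
    · have e1 : H.dist s' x ≤ dSet H s' D := hval ▸ h2
      have e2 : dSet H s' D ≠ H.dist s' x := hval ▸ hne
      omega
    · have e1 : dSet H s' D ≤ H.dist s' x := dSet_le hxD
      have e2 : dSet H s' (insert b D) = H.dist s' x := hval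
      omega
  exact ⟨s', hs', fun w hw => lt_of_lt_of_le hlt (dSet_le hw)⟩

/-- Weak version: `b` can be made (weakly) at least as close as every point of a small set. -/
lemma weak_point [Finite W] {H : SimpleGraph W} {S' : Set W} {ℓ : ℕ} (hS' : LSolid H S' ℓ)
    (hS'ne : S'.Nonempty) {b : W} {B : Set W} (hcard : B.ncard ≤ ℓ) :
    ∃ s' ∈ S', ∀ w ∈ B, H.dist s' b ≤ H.dist s' w := by
  by_cases hD : (B \ {b}).Nonempty
  · obtain ⟨s', hs', hlt⟩ := solid_point hS' (b := b) hD
      (le_trans (Set.ncard_le_ncard Set.diff_subset) hcard) (by simp)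
    refine ⟨s', hs', fun w hw => ?_⟩
    by_cases hwb : w = b
    · subst hwb; exact le_rfl
    · exact (hlt w ⟨hw, hwb⟩).le
  · obtain ⟨s', hs'⟩ := hS'ne
    refine ⟨s', hs', fun w hw => ?_⟩
    have hwb : w = b := by
      by_contra hwb
      exact hD ⟨w, hw, hwb⟩
    subst hwb; exact le_rfl

/-- From an `{ℓ}`-resolving set: a point outside a set can be strictly separated from it,
provided the total size is at most `ℓ`. -/
lemma resolve_point {G : SimpleGraph V} {S : Set V} {ℓ : ℕ} (hS : LResolving G S ℓ)
    {a : V} {A : Set V} [Finite V] (hA : A.Nonempty) (hcard : (insert a A).ncard ≤ ℓ)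
    (ha : a ∉ A) :
    ∃ s ∈ S, ∀ u ∈ A, G.dist s a < G.dist s u := by
  obtain ⟨s, hs, hne⟩ := hS A (insert a A) hA ⟨a, Set.mem_insert _ _⟩
    (le_trans (Set.ncard_le_ncard (Set.subset_insert a A)) hcard) hcard
    (fun h => ha (h ▸ Set.mem_insert a A))
  have h2 : dSet G s (insert a A) ≤ dSet G s A := by
    obtain ⟨x, hx, hval⟩ := exists_dSet s hA
    exact hval ▸ dSet_le (Set.mem_insert_of_mem _ hx)
  obtain ⟨x, hx, hval⟩ := exists_dSet s (⟨a, Set.mem_insert _ _⟩ : (insert a A).Nonempty)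
  have hlt : G.dist s a < dSet G s A := by
    rcases Set.mem_insert_iff.mp hx with rfl | hxA
    · have e1 : G.dist s x ≤ dSet G s A := hval ▸ h2
      have e2 : dSet G s A ≠ G.dist s x := hval ▸ hne
      omega
    · have e1 : dSet G s A ≤ G.dist s x := dSet_le hxA
      have e2 : dSet G s (insert a A) = G.dist s x := hval
      omega
  exact ⟨s, hs, fun u hu => lt_of_lt_of_le hlt (dSet_le hu)⟩

lemma boxProd_walk_le {G : SimpleGraph V} {H : SimpleGraph W} (hG : G.Connected)
    (hH : H.Connected) {x y : V × W} (p : (G.boxProd H).Walk x y) :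
    G.dist x.1 y.1 + H.dist x.2 y.2 ≤ p.length := by
  induction p with
  | nil => simp
  | @cons u v w h p ih =>
    rw [Walk.length_cons]
    rcases boxProd_adj.mp h with ⟨ha, he⟩ | ⟨ha, he⟩
    · have h1 : G.dist u.1 w.1 ≤ G.dist u.1 v.1 + G.dist v.1 w.1 := hG.dist_triangle
      have h0 : G.dist u.1 v.1 = 1 := dist_eq_one_iff_adj.mpr ha
      have h2 : H.dist u.2 w.2 = H.dist v.2 w.2 := by rw [he]
      omega
    · have h1 : H.dist u.2 w.2 ≤ H.dist u.2 v.2 + H.dist v.2 w.2 := hH.dist_triangle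
      have h0 : H.dist u.2 v.2 = 1 := dist_eq_one_iff_adj.mpr ha
      have h2 : G.dist u.1 w.1 = G.dist v.1 w.1 := by rw [he]
      omega

lemma boxProd_dist {G : SimpleGraph V} {H : SimpleGraph W} (hG : G.Connected)
    (hH : H.Connected) (x y : V × W) :
    (G.boxProd H).dist x y = G.dist x.1 y.1 + H.dist x.2 y.2 := by
  apply le_antisymm
  · obtain ⟨w1, hw1⟩ := hG.exists_walk_length_eq_dist x.1 y.1
    obtain ⟨w2, hw2⟩ := hH.exists_walk_length_eq_dist x.2 y.2
    have := dist_le ((w1.boxProdLeft H x.2).append (w2.boxProdRight G y.1))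
    have hlen : ((w1.boxProdLeft H x.2).append (w2.boxProdRight G y.1)).length =
        G.dist x.1 y.1 + H.dist x.2 y.2 := by
      have l1 : (w1.boxProdLeft H x.2).length = w1.length := Walk.length_map _ _
      have l2 : (w2.boxProdRight G y.1).length = w2.length := Walk.length_map _ _
      rw [Walk.length_append, l1, l2, hw1, hw2]
    exact this.trans_eq hlen
  · obtain ⟨p, hp⟩ := (hG.boxProd hH).exists_walk_length_eq_dist x y
    rw [← hp]
    exact boxProd_walk_le hG hH p

lemma dSet_lt_of_point {G : SimpleGraph (V × W)} {z : V × W} {X Y : Set (V × W)}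
    (hYne : Y.Nonempty) {p : V × W} (hp : p ∈ X)
    (h : ∀ q ∈ Y, G.dist z p < G.dist z q) :
    dSet G z X < dSet G z Y := by
  obtain ⟨q, hq, hval⟩ := exists_dSet z hYne
  calc dSet G z X ≤ G.dist z p := dSet_le hp
    _ < G.dist z q := h q hq
    _ = dSet G z Y := hval.symm

/-- Case where the first projections differ: a point of `X` strictly dominated over
the projection of `Y` yields a strict separation of `X` from `Y`. -/
lemma scenario1 {G : SimpleGraph V} {H : SimpleGraph W} {S' : Set W} {ℓ : ℕ}
    (hS' : LSolid H S' ℓ) (hS'ne : S'.Nonempty) [Finite V] [Finite W]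
    {X Y : Set (V × W)} (hYc : Y.ncard ≤ ℓ) {s : V} {u0 : V} {w0 : W}
    (hX : (u0, w0) ∈ X) (hdom : ∀ u ∈ Prod.fst '' Y, G.dist s u0 < G.dist s u) :
    ∃ s' ∈ S', ∀ q ∈ Y, G.dist s u0 + H.dist s' w0 < G.dist s q.1 + H.dist s' q.2 := by
  obtain ⟨s', hs', hw⟩ := weak_point hS' hS'ne (b := w0) (B := Prod.snd '' Y)
    (le_trans (Set.ncard_image_le Y.toFinite) hYc)
  refine ⟨s', hs', fun q hq => ?_⟩
  have h1 : G.dist s u0 < G.dist s q.1 := hdom q.1 ⟨q, hq, rfl⟩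
  have h2 : H.dist s' w0 ≤ H.dist s' q.2 := hw q.2 ⟨q, hq, rfl⟩
  omega

/-- Case where `(a, b) ∈ X \ Y` but `Y` has a point with first coordinate `a`. -/
lemma scenario2 {G : SimpleGraph V} {H : SimpleGraph W} {S : Set V} {S' : Set W} {ℓ : ℕ}
    (hS : LResolving G S ℓ) (hS' : LSolid H S' ℓ) (hSne : S.Nonempty)
    [Finite V] [Finite W]
    {X Y : Set (V × W)} (hYc : Y.ncard ≤ ℓ) {a : V} {b : W}
    (hab : (a, b) ∈ X) (habn : (a, b) ∉ Y) {w₀ : W} (hw₀ : (a, w₀) ∈ Y) :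
    ∃ s ∈ S, ∃ s' ∈ S', ∀ q ∈ Y, G.dist s a + H.dist s' b < G.dist s q.1 + H.dist s' q.2 := by
  classical
  set Ya : Set W := {w | (a, w) ∈ Y} with hYadef
  set Y₂ : Set (V × W) := {q ∈ Y | q.1 ≠ a} with hY₂def
  set D : Set W := Ya ∪ (Prod.snd '' Y₂ \ {b}) with hDdef
  have hDsub : D ⊆ Prod.snd '' Y := by
    rintro w (hw | ⟨⟨q, hq, rfl⟩, -⟩)
    · exact ⟨(a, w), hw, rfl⟩
    · exact ⟨q, hq.1, rfl⟩
  have hDcard : D.ncard ≤ ℓ :=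
    le_trans (Set.ncard_le_ncard hDsub (Set.toFinite _))
      (le_trans (Set.ncard_image_le Y.toFinite) hYc)
  have hbD : b ∉ D := by
    rintro (hb | ⟨-, hb⟩)
    · exact habn hb
    · exact hb rfl
  have hDne : D.Nonempty := ⟨w₀, Or.inl hw₀⟩
  obtain ⟨s', hs', hs'lt⟩ := solid_point hS' hDne hDcard hbD
  have hdom : ∃ s ∈ S, ∀ q ∈ Y, q.1 ≠ a → G.dist s a < G.dist s q.1 := by
    set A₂ : Set V := Prod.fst '' Y₂ with hA₂def
    by_cases hA₂ : A₂.Nonempty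
    · have haA₂ : a ∉ A₂ := by
        rintro ⟨q, hq, rfl⟩
        exact hq.2 rfl
      have hY₂lt : Y₂.ncard < Y.ncard := by
        refine Set.ncard_lt_ncard ⟨Set.sep_subset _ _, fun hsub => ?_⟩ (Set.toFinite _)
        exact (hsub hw₀).2 rfl
      have hcard : (insert a A₂).ncard ≤ ℓ := by
        have e1 : (insert a A₂).ncard ≤ A₂.ncard + 1 := Set.ncard_insert_le _ _
        have e2 : A₂.ncard ≤ Y₂.ncard := Set.ncard_image_le (Set.toFinite _)
        omega
      obtain ⟨s, hs, hlt⟩ := resolve_point hS hA₂ hcard haA₂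
      exact ⟨s, hs, fun q hq hq1 => hlt q.1 ⟨q, ⟨hq, hq1⟩, rfl⟩⟩
    · obtain ⟨s, hs⟩ := hSne
      exact ⟨s, hs, fun q hq hq1 => absurd ⟨q.1, ⟨q, ⟨hq, hq1⟩, rfl⟩⟩ hA₂⟩
  obtain ⟨s, hs, hslt⟩ := hdom
  refine ⟨s, hs, s', hs', fun q hq => ?_⟩
  by_cases hq1 : q.1 = a
  · have hqY : (a, q.2) ∈ Y := by
      rw [← hq1]
      exact hq
    have h2 : H.dist s' b < H.dist s' q.2 := hs'lt q.2 (Or.inl hqY)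
    rw [hq1]
    omega
  · have h1 : G.dist s a < G.dist s q.1 := hslt q hq hq1
    have h2 : H.dist s' b ≤ H.dist s' q.2 := by
      by_cases hqb : q.2 = b
      · rw [hqb]
      · exact (hs'lt q.2 (Or.inr ⟨⟨q, ⟨hq, hq1⟩, rfl⟩, hqb⟩)).le
    omega

end Aux

theorem stmt_12 {W : Type*} [Fintype V] [Fintype W] [Nontrivial V] [Nontrivial W]
    (G : SimpleGraph V) (H : SimpleGraph W) (hG : G.Connected) (hH : H.Connected)
    (ℓ : ℕ) (hℓ : 2 ≤ ℓ) (S : Set V) (S' : Set W)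
    (hS : LResolving G S ℓ) (hS' : LSolid H S' ℓ) :
    LResolving (G.boxProd H) (S ×ˢ S') ℓ := by
  classical
  have hbox : ∀ x y : V × W, (G.boxProd H).dist x y = G.dist x.1 y.1 + H.dist x.2 y.2 :=
    boxProd_dist hG hH
  have hSne : S.Nonempty := by
    obtain ⟨v₁, v₂, hv⟩ := exists_pair_ne V
    obtain ⟨s, hs, -⟩ := hS {v₁} {v₂} ⟨v₁, rfl⟩ ⟨v₂, rfl⟩
      (by simpa using Nat.one_le_of_lt hℓ) (by simpa using Nat.one_le_of_lt hℓ)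
      (by simpa using hv)
    exact ⟨s, hs⟩
  have hS'ne : S'.Nonempty := by
    obtain ⟨w₁, w₂, hw⟩ := exists_pair_ne W
    obtain ⟨s', hs', -⟩ := hS' {w₁} {w₂} ⟨w₁, rfl⟩ ⟨w₂, rfl⟩
      (by simpa using Nat.one_le_of_lt hℓ) (by simpa using hw)
    exact ⟨s', hs'⟩
  intro X Y hXne hYne hXc hYc hXY
  by_contra hcon
  push_neg at hcon
  have heq : ∀ s ∈ S, ∀ s' ∈ S',
      dSet (G.boxProd H) (s, s') X = dSet (G.boxProd H) (s, s') Y := by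
    intro s hs s' hs'
    exact hcon (s, s') (Set.mk_mem_prod hs hs')
  by_cases hproj : Prod.fst '' X = Prod.fst '' Y
  · -- projections equal: some fiber differs
    have hexists : (∃ p, p ∈ X ∧ p ∉ Y) ∨ (∃ p, p ∈ Y ∧ p ∉ X) := by
      by_contra hno
      push_neg at hno
      exact hXY (Set.eq_of_subset_of_subset (fun p hp => hno.1 p hp) (fun p hp => hno.2 p hp))
    rcases hexists with ⟨p, hpX, hpY⟩ | ⟨p, hpY, hpX⟩
    · -- p ∈ X \ Y
      have hpfib : ∃ w, (p.1, w) ∈ Y := by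
        have : p.1 ∈ Prod.fst '' Y := hproj ▸ ⟨p, hpX, rfl⟩
        obtain ⟨q, hq, hq1⟩ := this
        exact ⟨q.2, by rw [← hq1]; exact hq⟩
      obtain ⟨w₀, hw₀⟩ := hpfib
      obtain ⟨s, hs, s', hs', hstrict⟩ := scenario2 hS hS' hSne hYc
        (a := p.1) (b := p.2) (X := X) hpX hpY hw₀
      have hlt : dSet (G.boxProd H) (s, s') X < dSet (G.boxProd H) (s, s') Y := by
        refine dSet_lt_of_point hYne (p := (p.1, p.2)) hpX ?_
        intro q hq
        rw [hbox, hbox]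
        exact hstrict q hq
      exact absurd (heq s hs s' hs') hlt.ne
    · -- p ∈ Y \ X
      have hpfib : ∃ w, (p.1, w) ∈ X := by
        have : p.1 ∈ Prod.fst '' X := hproj ▸ ⟨p, hpY, rfl⟩
        obtain ⟨q, hq, hq1⟩ := this
        exact ⟨q.2, by rw [← hq1]; exact hq⟩
      obtain ⟨w₀, hw₀⟩ := hpfib
      obtain ⟨s, hs, s', hs', hstrict⟩ := scenario2 hS hS' hSne hXc
        (a := p.1) (b := p.2) (X := Y) hpY hpX hw₀
      have hlt : dSet (G.boxProd H) (s, s') Y < dSet (G.boxProd H) (s, s') X := by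
        refine dSet_lt_of_point hXne (p := (p.1, p.2)) hpY ?_
        intro q hq
        rw [hbox, hbox]
        exact hstrict q hq
      exact absurd (heq s hs s' hs') hlt.ne'
  · -- projections differ
    obtain ⟨s, hs, hne⟩ := hS (Prod.fst '' X) (Prod.fst '' Y) (hXne.image _) (hYne.image _)
      (le_trans (Set.ncard_image_le X.toFinite) hXc)
      (le_trans (Set.ncard_image_le Y.toFinite) hYc) hproj
    rcases hne.lt_or_gt with hlt | hlt
    · obtain ⟨u0, hu0, hval⟩ := exists_dSet (G := G) s (hXne.image Prod.fst)
      obtain ⟨p, hp, hp1⟩ := hu0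
      have hpX : (u0, p.2) ∈ X := by rw [← hp1]; exact hp
      have hdom : ∀ u ∈ Prod.fst '' Y, G.dist s u0 < G.dist s u := by
        intro u hu
        have := dSet_le (G := G) (s := s) hu
        omega
      obtain ⟨s', hs', hstrict⟩ := scenario1 hS' hS'ne hYc (X := X)
        (u0 := u0) (w0 := p.2) hpX hdom
      have hlt2 : dSet (G.boxProd H) (s, s') X < dSet (G.boxProd H) (s, s') Y := by
        refine dSet_lt_of_point hYne (p := (u0, p.2)) hpX ?_
        intro q hq
        rw [hbox, hbox]
        exact hstrict q hq
      exact absurd (heq s hs s' hs') hlt2.ne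
    · obtain ⟨u0, hu0, hval⟩ := exists_dSet (G := G) s (hYne.image Prod.fst)
      obtain ⟨p, hp, hp1⟩ := hu0
      have hpY : (u0, p.2) ∈ Y := by rw [← hp1]; exact hp
      have hdom : ∀ u ∈ Prod.fst '' X, G.dist s u0 < G.dist s u := by
        intro u hu
        have := dSet_le (G := G) (s := s) hu
        omega
      obtain ⟨s', hs', hstrict⟩ := scenario1 hS' hS'ne hXc (X := Y)
        (u0 := u0) (w0 := p.2) hpY hdom
      have hlt2 : dSet (G.boxProd H) (s, s') Y < dSet (G.boxProd H) (s, s') X := by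
        refine dSet_lt_of_point hXne (p := (u0, p.2)) hpY ?_
        intro q hq
        rw [hbox, hbox]
        exact hstrict q hq
      exact absurd (heq s hs s' hs') hlt2.ne'
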